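/- Let G be the incidence graph of a projective plane of order n ≥ 2, and consider the cop-and-drunk game on G with starting vertices u (cop) and v (robber) at graph distance d(u,v) ≥ 2. Then for every cop strategy the expected capture time is at least n + 1 (the degree of regularity of G). In particular, since G has diameter 3, no function of the diameter alone can bound the expected capture time. -/

import Mathlib

open scoped Classical ENNReal

/-- The incidence graph of a point–line incidence structure: the bipartite simple graph on
`P ⊕ L` in which a point is adjacent to a line iff the point lies on the line. -/
def incidenceGraph {P L : Type} (incid : P → L → Prop) : SimpleGraph (P ⊕ L) where
  Adj x y :=
    (∃ p l, x = Sum.inl p ∧ y = Sum.inr l ∧ incid p l) ∨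
      (∃ p l, x = Sum.inr l ∧ y = Sum.inl p ∧ incid p l)
  symm := by
    constructor
    rintro x y (⟨p, l, rfl, rfl, h⟩ | ⟨p, l, rfl, rfl, h⟩)
    · exact Or.inr ⟨p, l, rfl, rfl, h⟩
    · exact Or.inl ⟨p, l, rfl, rfl, h⟩
  loopless := by
    constructor
    rintro x (⟨p, l, rfl, hx, h⟩ | ⟨p, l, rfl, hx, h⟩) <;> simp at hx

/-- The axioms of a projective plane of order `n`, stated for a point type `P`, a line type
`L`, and an incidence relation `incid`:  two distinct points lie on a unique common line,
two distinct lines meet in a unique common point, every line has exactly `n+1` points,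
every point is on exactly `n+1` lines, and there are exactly `n²+n+1` points and
`n²+n+1` lines. -/
structure IsProjectivePlaneOfOrder {P L : Type} (incid : P → L → Prop) (n : ℕ) : Prop where
  exists_unique_line : ∀ p q : P, p ≠ q → ∃! l : L, incid p l ∧ incid q l
  exists_unique_point : ∀ l m : L, l ≠ m → ∃! p : P, incid p l ∧ incid p m
  card_points_on_line : ∀ l : L, Nat.card {p : P // incid p l} = n + 1
  card_lines_through_point : ∀ p : P, Nat.card {l : L // incid p l} = n + 1
  card_points : Nat.card P = n ^ 2 + n + 1
  card_lines : Nat.card L = n ^ 2 + n + 1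

/-! ## The cop-and-drunk game

A cop starts at `u`, a robber at `v`.  In each move the cop steps to an adjacent vertex
(seeing everything), then the robber steps to a uniformly random adjacent vertex.
A cop strategy is a function assigning to each finite history of play (equivalently, to the
finite sequence of robber positions observed so far, which together with the strategy itself
determines the whole history) the cop's next vertex.  Capture occurs the first time the two
players occupy the same vertex, whether after the cop's step or after the robber's step, and
the capture time is the index of that move.  The expected capture time is computed as
`∑_{k≥0} P(T > k)` in `ℝ≥0∞`, where the probability of a robber trajectory is the product of
the transition weights `1/deg` of the simple random walk (so non-walk trajectories get
weight `0`). -/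

/-- The cop's position after move `k`, given strategy `σ`, starting vertex `u`, and the
robber's trajectory `r` (the strategy sees the history `r 0, …, r (k-1)`). -/
def copPos {V : Type} (σ : List V → V) (u : V) (r : ℕ → V) : ℕ → V
  | 0 => u
  | k + 1 => σ (List.ofFn fun i : Fin (k + 1) => r i)

/-- A strategy is valid for `G` if the cop always moves from her current vertex to an
adjacent vertex. -/
def ValidStrategy {V : Type} (G : SimpleGraph V) (σ : List V → V) (u : V) : Prop :=
  ∀ (r : ℕ → V) (k : ℕ), G.Adj (copPos σ u r k) (copPos σ u r (k + 1))

/-- The robber following trajectory `r` has been captured by the end of move `k`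
(including capture at time `0` in case the two players start on the same vertex):
at some move `j ≤ k`, either the cop stepped onto the robber's current vertex, or the
robber stepped onto the cop's vertex. -/
def CapturedBy {V : Type} (σ : List V → V) (u : V) (r : ℕ → V) (k : ℕ) : Prop :=
  r 0 = u ∨ ∃ j, 1 ≤ j ∧ j ≤ k ∧ (copPos σ u r j = r (j - 1) ∨ copPos σ u r j = r j)

/-- Probability weight of the first `k` steps of the trajectory `r` for the simple random
walk on `G`: the product of `1/deg` over the steps, and `0` if some step is not an edge. -/
noncomputable def pathWt {V : Type} [Fintype V] (G : SimpleGraph V) (r : ℕ → V) (k : ℕ) :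
    ℝ≥0∞ :=
  ∏ i ∈ Finset.range k, if G.Adj (r i) (r (i + 1)) then ((G.degree (r i) : ℝ≥0∞))⁻¹ else 0

/-- Extend a finite trajectory to an infinite one (constant after time `k`). -/
def pad {V : Type} (k : ℕ) (q : Fin (k + 1) → V) : ℕ → V :=
  fun i => q ⟨min i k, Nat.lt_succ_of_le (Nat.min_le_right i k)⟩

/-- The probability that the robber, starting at `v` and performing a simple random walk on
`G`, survives (is not yet captured) through the end of move `k`, against the cop playing
strategy `σ` from `u`. -/
noncomputable def survival {V : Type} [Fintype V] (G : SimpleGraph V) (σ : List V → V)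
    (u v : V) (k : ℕ) : ℝ≥0∞ :=
  ∑ q : Fin (k + 1) → V,
    if q 0 = v ∧ ¬ CapturedBy σ u (pad k q) k then pathWt G (pad k q) k else 0

/-- The expected capture time `E[T] = ∑_{k ≥ 0} P(T > k)` of the cop-and-drunk game on `G`,
with the cop starting at `u` playing strategy `σ` and the robber starting at `v`. -/
noncomputable def expCaptureTime {V : Type} [Fintype V] (G : SimpleGraph V) (σ : List V → V)
    (u v : V) : ℝ≥0∞ :=
  ∑' k : ℕ, survival G σ u v k


section AuxLemmas

variable {V : Type}

lemma copPos_congr (σ : List V → V) (u : V) {r r' : ℕ → V} {k : ℕ}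
    (h : ∀ i < k, r i = r' i) : ∀ j ≤ k, copPos σ u r j = copPos σ u r' j := by
  intro j hj
  cases j with
  | zero => rfl
  | succ m =>
    simp only [copPos]
    congr 1
    apply congrArg
    funext i
    exact h i (lt_of_lt_of_le i.2 hj)

lemma pad_eq {k : ℕ} (q : Fin (k + 1) → V) {i : ℕ} (h : i < k + 1) :
    pad k q i = q ⟨i, h⟩ := by
  simp only [pad]
  congr 1
  apply Fin.ext
  simp
  omega

lemma pad_snoc_le {k : ℕ} (q : Fin (k + 1) → V) (x : V) {i : ℕ} (hi : i ≤ k) :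
    pad (k + 1) (Fin.snoc q x) i = pad k q i := by
  rw [pad_eq (Fin.snoc q x) (by omega : i < k + 2), pad_eq q (by omega : i < k + 1)]
  have : (⟨i, by omega⟩ : Fin (k + 2)) = Fin.castSucc ⟨i, by omega⟩ := rfl
  rw [this, Fin.snoc_castSucc]

lemma pad_snoc_last {k : ℕ} (q : Fin (k + 1) → V) (x : V) :
    pad (k + 1) (Fin.snoc q x) (k + 1) = x := by
  rw [pad_eq (Fin.snoc q x) (by omega : k + 1 < k + 2)]
  have : (⟨k + 1, by omega⟩ : Fin (k + 2)) = Fin.last (k + 1) := rfl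
  rw [this, Fin.snoc_last]

/-- Cop and robber are neither on the same vertex nor adjacent. -/
def CSep (G : SimpleGraph V) (a b : V) : Prop := a ≠ b ∧ ¬ G.Adj a b

/-- Sum of path weights over trajectories keeping the robber separated from the cop
through move `k`. -/
noncomputable def goodSum [Fintype V] (G : SimpleGraph V) (σ : List V → V)
    (u v : V) (k : ℕ) : ℝ≥0∞ :=
  ∑ q : Fin (k + 1) → V,
    if q 0 = v ∧ ∀ j ≤ k, CSep G (copPos σ u (pad k q) j) (pad k q j)
    then pathWt G (pad k q) k else 0

lemma goodSum_le_survival [Fintype V] (G : SimpleGraph V) (σ : List V → V) (u v : V)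
    (hσ : ValidStrategy G σ u) (k : ℕ) :
    goodSum G σ u v k ≤ survival G σ u v k := by
  refine Finset.sum_le_sum fun q _ => ?_
  by_cases h : q 0 = v ∧ ∀ j ≤ k, CSep G (copPos σ u (pad k q) j) (pad k q j)
  · rw [if_pos h, if_pos]
    refine ⟨h.1, ?_⟩
    rintro (h0 | ⟨j, hj1, hjk, hcap⟩)
    · have := (h.2 0 (Nat.zero_le k)).1
      exact this (by simpa [copPos] using h0.symm)
    · rcases hcap with hcap | hcap
      · obtain ⟨m, rfl⟩ : ∃ m, j = m + 1 := ⟨j - 1, by omega⟩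
        have hsep := h.2 m (by omega)
        have hadj := hσ (pad k q) m
        rw [hcap] at hadj
        simp only [Nat.add_sub_cancel] at hadj
        exact hsep.2 hadj
      · exact (h.2 j (by omega)).1 hcap
  · rw [if_neg h]
    exact zero_le

lemma goodSum_zero [Fintype V] (G : SimpleGraph V) (σ : List V → V) (u v : V)
    (hsep : CSep G u v) : goodSum G σ u v 0 = 1 := by
  rw [goodSum]
  rw [Finset.sum_eq_single_of_mem (fun _ => v) (Finset.mem_univ _)]
  · rw [if_pos, pathWt]
    · simp
    constructor
    · rfl
    · intro j hj
      interval_cases j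
      exact hsep
  · intro q _ hq
    rw [if_neg]
    rintro ⟨h0, -⟩
    apply hq
    funext i
    have : i = 0 := by apply Fin.ext; have := i.2; omega
    rw [this, h0]


lemma goodSum_succ [Fintype V] (G : SimpleGraph V) (σ : List V → V) (u v : V) (n : ℕ)
    (hreg : ∀ x : V, G.degree x = n + 1)
    (hbad : ∀ a b : V, a ≠ b → ∀ w1 w2 : V,
      G.Adj b w1 ∧ (w1 = a ∨ G.Adj a w1) → G.Adj b w2 ∧ (w2 = a ∨ G.Adj a w2) → w1 = w2)
    (hσ : ValidStrategy G σ u) (k : ℕ) :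
    (n : ℝ≥0∞) * ((n : ℝ≥0∞) + 1)⁻¹ * goodSum G σ u v k ≤ goodSum G σ u v (k + 1) := by
  have hsnoc : goodSum G σ u v (k + 1) =
      ∑ p : V × (Fin (k + 1) → V),
        (fun q : Fin (k + 2) → V =>
          if q 0 = v ∧ ∀ j ≤ k + 1, CSep G (copPos σ u (pad (k+1) q) j) (pad (k+1) q j)
          then pathWt G (pad (k+1) q) (k + 1) else 0) (Fin.snoc p.2 p.1) := by
    rw [goodSum, ← Equiv.sum_comp (Fin.snocEquiv (fun _ => V))]
    rfl
  rw [hsnoc, Fintype.sum_prod_type, Finset.sum_comm, goodSum, Finset.mul_sum]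
  refine Finset.sum_le_sum fun q _ => ?_
  by_cases hc : q 0 = v ∧ ∀ j ≤ k, CSep G (copPos σ u (pad k q) j) (pad k q j)
  swap
  · rw [if_neg hc, mul_zero]
    exact zero_le
  rw [if_pos hc]
  set r := pad k q with hr
  set cK := copPos σ u r (k + 1) with hcK
  -- basic facts
  have hcop : ∀ (x : V) (j : ℕ), j ≤ k + 1 →
      copPos σ u (pad (k+1) (Fin.snoc q x)) j = copPos σ u r j := by
    intro x j hj
    refine copPos_congr σ u (fun i hi => ?_) j hj
    exact pad_snoc_le q x (by omega)
  have hcKne : cK ≠ r k := by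
    intro h
    have hadj := hσ r k
    rw [← hcK, h] at hadj
    exact ((hc.2 k le_rfl).2 hadj)
  -- rewrite each inner summand
  have hterm : ∀ x : V,
      (if (Fin.snoc q x : Fin (k+2) → V) 0 = v ∧
          ∀ j ≤ k + 1, CSep G (copPos σ u (pad (k+1) (Fin.snoc q x)) j)
            (pad (k+1) (Fin.snoc q x) j)
        then pathWt G (pad (k+1) (Fin.snoc q x)) (k + 1) else 0)
      = (if CSep G cK x ∧ G.Adj (r k) x
          then pathWt G r k * ((n : ℝ≥0∞) + 1)⁻¹ else 0) := by
    intro x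
    have h0 : (Fin.snoc q x : Fin (k+2) → V) 0 = q 0 := by
      rw [← Fin.castSucc_zero, Fin.snoc_castSucc]
    have hpw : pathWt G (pad (k+1) (Fin.snoc q x)) (k + 1) =
        pathWt G r k * (if G.Adj (r k) x then ((G.degree (r k) : ℝ≥0∞))⁻¹ else 0) := by
      rw [pathWt, Finset.prod_range_succ, pathWt]
      congr 1
      · refine Finset.prod_congr rfl fun i hi => ?_
        rw [Finset.mem_range] at hi
        rw [pad_snoc_le q x (by omega), pad_snoc_le q x (by omega)]
      · rw [pad_snoc_le q x le_rfl, pad_snoc_last q x]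
    by_cases hx : CSep G cK x ∧ G.Adj (r k) x
    · have hcond : (Fin.snoc q x : Fin (k+2) → V) 0 = v ∧
          ∀ j ≤ k + 1, CSep G (copPos σ u (pad (k+1) (Fin.snoc q x)) j)
            (pad (k+1) (Fin.snoc q x) j) := by
        refine ⟨by rw [h0]; exact hc.1, fun j hj => ?_⟩
        rcases Nat.lt_or_ge j (k + 1) with hj' | hj'
        · rw [hcop x j (by omega), pad_snoc_le q x (by omega)]
          exact hc.2 j (by omega)
        · have : j = k + 1 := by omega
          subst this
          rw [hcop x (k+1) le_rfl, pad_snoc_last q x, ← hcK]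
          exact hx.1
      rw [if_pos hx, if_pos hcond, hpw, if_pos hx.2, hreg]
      norm_cast
    · rw [if_neg hx]
      by_cases hcond : (Fin.snoc q x : Fin (k+2) → V) 0 = v ∧
          ∀ j ≤ k + 1, CSep G (copPos σ u (pad (k+1) (Fin.snoc q x)) j)
            (pad (k+1) (Fin.snoc q x) j)
      · rw [if_pos hcond, hpw]
        by_cases hadj : G.Adj (r k) x
        · exfalso
          apply hx
          refine ⟨?_, hadj⟩
          have := hcond.2 (k+1) le_rfl
          rw [hcop x (k+1) le_rfl, pad_snoc_last q x, ← hcK] at this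
          exact this
        · rw [if_neg hadj, mul_zero]
      · rw [if_neg hcond]
  calc (n : ℝ≥0∞) * ((n : ℝ≥0∞) + 1)⁻¹ * pathWt G r k
      ≤ ((Finset.univ.filter fun x : V => CSep G cK x ∧ G.Adj (r k) x).card : ℝ≥0∞) *
        (((n : ℝ≥0∞) + 1)⁻¹ * pathWt G r k) := by
        rw [← mul_assoc]
        refine mul_le_mul' (mul_le_mul' ?_ le_rfl) le_rfl
        rw [Nat.cast_le (α := ℝ≥0∞)]
        -- card bound
        have hsub : ((G.neighborFinset (r k)).filter fun w => ¬(w = cK ∨ G.Adj cK w)) ⊆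
            Finset.univ.filter fun x : V => CSep G cK x ∧ G.Adj (r k) x := by
          intro w hw
          rw [Finset.mem_filter, SimpleGraph.mem_neighborFinset] at hw
          rw [Finset.mem_filter]
          push_neg at hw
          exact ⟨Finset.mem_univ _, ⟨Ne.symm hw.2.1, hw.2.2⟩, hw.1⟩
        refine le_trans ?_ (Finset.card_le_card hsub)
        rw [Finset.filter_not, Finset.card_sdiff_of_subset (Finset.filter_subset _ _),
          SimpleGraph.card_neighborFinset_eq_degree, hreg]
        have hbc : ((G.neighborFinset (r k)).filter fun w => w = cK ∨ G.Adj cK w).card ≤ 1 := by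
          rw [Finset.card_le_one]
          intro w1 h1 w2 h2
          rw [Finset.mem_filter, SimpleGraph.mem_neighborFinset] at h1 h2
          exact hbad cK (r k) hcKne w1 w2 ⟨h1.1, h1.2⟩ ⟨h2.1, h2.2⟩
        omega
    _ = ∑ x : V, (if CSep G cK x ∧ G.Adj (r k) x
          then pathWt G r k * ((n : ℝ≥0∞) + 1)⁻¹ else 0) := by
        rw [← Finset.sum_filter, Finset.sum_const, nsmul_eq_mul]
        ring
    _ = _ := by
        exact (Finset.sum_congr rfl fun x _ => (hterm x).symm)


lemma goodSum_ge_pow [Fintype V] (G : SimpleGraph V) (σ : List V → V) (u v : V) (n : ℕ)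
    (hreg : ∀ x : V, G.degree x = n + 1)
    (hbad : ∀ a b : V, a ≠ b → ∀ w1 w2 : V,
      G.Adj b w1 ∧ (w1 = a ∨ G.Adj a w1) → G.Adj b w2 ∧ (w2 = a ∨ G.Adj a w2) → w1 = w2)
    (hσ : ValidStrategy G σ u) (hsep : CSep G u v) (k : ℕ) :
    ((n : ℝ≥0∞) * ((n : ℝ≥0∞) + 1)⁻¹) ^ k ≤ goodSum G σ u v k := by
  induction k with
  | zero => rw [pow_zero, goodSum_zero G σ u v hsep]
  | succ m ih =>
    calc ((n : ℝ≥0∞) * ((n : ℝ≥0∞) + 1)⁻¹) ^ (m + 1)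
        = (n : ℝ≥0∞) * ((n : ℝ≥0∞) + 1)⁻¹ * ((n : ℝ≥0∞) * ((n : ℝ≥0∞) + 1)⁻¹) ^ m := by
          rw [pow_succ, mul_comm]
      _ ≤ (n : ℝ≥0∞) * ((n : ℝ≥0∞) + 1)⁻¹ * goodSum G σ u v m := mul_le_mul' le_rfl ih
      _ ≤ goodSum G σ u v (m + 1) := goodSum_succ G σ u v n hreg hbad hσ m

end AuxLemmas

section PlaneLemmas

variable {P L : Type} (incid : P → L → Prop)

lemma adj_inl {p : P} {y : P ⊕ L} :
    (incidenceGraph incid).Adj (Sum.inl p) y ↔ ∃ l, y = Sum.inr l ∧ incid p l := by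
  constructor
  · rintro (⟨p', l, hp, rfl, h⟩ | ⟨p', l, hp, -, -⟩)
    · injection hp with hp
      subst hp
      exact ⟨l, rfl, h⟩
    · exact absurd hp (by simp)
  · rintro ⟨l, rfl, h⟩
    exact Or.inl ⟨p, l, rfl, rfl, h⟩

lemma adj_inr {l : L} {y : P ⊕ L} :
    (incidenceGraph incid).Adj (Sum.inr l) y ↔ ∃ p, y = Sum.inl p ∧ incid p l := by
  constructor
  · rintro (⟨p', l', hp, -, -⟩ | ⟨p', l', hl, rfl, h⟩)
    · exact absurd hp (by simp)
    · injection hl with hl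
      subst hl
      exact ⟨p', rfl, h⟩
  · rintro ⟨p, rfl, h⟩
    exact Or.inr ⟨p, l, rfl, rfl, h⟩

lemma degree_incidence [Fintype P] [Fintype L] (n : ℕ)
    (hpp : IsProjectivePlaneOfOrder incid n) (x : P ⊕ L) :
    (incidenceGraph incid).degree x = n + 1 := by
  cases x with
  | inl p =>
    rw [← SimpleGraph.card_neighborSet_eq_degree]
    have hcard : Fintype.card {l : L // incid p l} = n + 1 := by
      rw [← Nat.card_eq_fintype_card]
      exact hpp.card_lines_through_point p
    rw [← hcard]
    refine Fintype.card_congr (Equiv.ofBijective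
      (fun l : {l : L // incid p l} =>
        (⟨Sum.inr l.1, Or.inl ⟨p, l.1, rfl, rfl, l.2⟩⟩ :
          (incidenceGraph incid).neighborSet (Sum.inl p))) ⟨?_, ?_⟩).symm
    · intro l1 l2 h
      apply Subtype.ext
      simpa using congrArg Subtype.val h
    · rintro ⟨y, hy⟩
      obtain ⟨l, rfl, h⟩ := (adj_inl incid).1 hy
      exact ⟨⟨l, h⟩, rfl⟩
  | inr l =>
    rw [← SimpleGraph.card_neighborSet_eq_degree]
    have hcard : Fintype.card {p : P // incid p l} = n + 1 := by
      rw [← Nat.card_eq_fintype_card]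
      exact hpp.card_points_on_line l
    rw [← hcard]
    refine Fintype.card_congr (Equiv.ofBijective
      (fun p : {p : P // incid p l} =>
        (⟨Sum.inl p.1, Or.inr ⟨p.1, l, rfl, rfl, p.2⟩⟩ :
          (incidenceGraph incid).neighborSet (Sum.inr l))) ⟨?_, ?_⟩).symm
    · intro p1 p2 h
      apply Subtype.ext
      simpa using congrArg Subtype.val h
    · rintro ⟨y, hy⟩
      obtain ⟨p, rfl, h⟩ := (adj_inr incid).1 hy
      exact ⟨⟨p, h⟩, rfl⟩

lemma bad_card_le [Fintype P] [Fintype L] (n : ℕ)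
    (hpp : IsProjectivePlaneOfOrder incid n) {a b : P ⊕ L} (hab : a ≠ b)
    (w1 w2 : P ⊕ L)
    (hw1 : (incidenceGraph incid).Adj b w1 ∧ (w1 = a ∨ (incidenceGraph incid).Adj a w1))
    (hw2 : (incidenceGraph incid).Adj b w2 ∧ (w2 = a ∨ (incidenceGraph incid).Adj a w2)) :
    w1 = w2 := by
  cases b with
  | inl p =>
    obtain ⟨l1, rfl, hl1⟩ := (adj_inl incid).1 hw1.1
    obtain ⟨l2, rfl, hl2⟩ := (adj_inl incid).1 hw2.1
    cases a with
    | inl q =>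
      have hpq : p ≠ q := fun h => hab (by rw [h])
      have h1 : incid q l1 := by
        rcases hw1.2 with h | h
        · exact absurd h (by simp)
        · obtain ⟨l, heq, h⟩ := (adj_inl incid).1 h
          injection heq with heq
          subst heq
          exact h
      have h2 : incid q l2 := by
        rcases hw2.2 with h | h
        · exact absurd h (by simp)
        · obtain ⟨l, heq, h⟩ := (adj_inl incid).1 h
          injection heq with heq
          subst heq
          exact h
      obtain ⟨l0, -, huniq⟩ := hpp.exists_unique_line p q hpq
      rw [huniq l1 ⟨hl1, h1⟩, huniq l2 ⟨hl2, h2⟩]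
    | inr m =>
      have h1 : (Sum.inr l1 : P ⊕ L) = Sum.inr m := by
        rcases hw1.2 with h | h
        · exact h
        · obtain ⟨p', heq, -⟩ := (adj_inr incid).1 h
          exact absurd heq (by simp)
      have h2 : (Sum.inr l2 : P ⊕ L) = Sum.inr m := by
        rcases hw2.2 with h | h
        · exact h
        · obtain ⟨p', heq, -⟩ := (adj_inr incid).1 h
          exact absurd heq (by simp)
      rw [h1, h2]
  | inr l =>
    obtain ⟨p1, rfl, hp1⟩ := (adj_inr incid).1 hw1.1
    obtain ⟨p2, rfl, hp2⟩ := (adj_inr incid).1 hw2.1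
    cases a with
    | inr m =>
      have hlm : l ≠ m := fun h => hab (by rw [h])
      have h1 : incid p1 m := by
        rcases hw1.2 with h | h
        · exact absurd h (by simp)
        · obtain ⟨p', heq, h⟩ := (adj_inr incid).1 h
          injection heq with heq
          subst heq
          exact h
      have h2 : incid p2 m := by
        rcases hw2.2 with h | h
        · exact absurd h (by simp)
        · obtain ⟨p', heq, h⟩ := (adj_inr incid).1 h
          injection heq with heq
          subst heq
          exact h
      obtain ⟨p0, -, huniq⟩ := hpp.exists_unique_point l m hlm
      rw [huniq p1 ⟨hp1, h1⟩, huniq p2 ⟨hp2, h2⟩]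
    | inl q =>
      have h1 : (Sum.inl p1 : P ⊕ L) = Sum.inl q := by
        rcases hw1.2 with h | h
        · exact h
        · obtain ⟨l', heq, -⟩ := (adj_inl incid).1 h
          exact absurd heq (by simp)
      have h2 : (Sum.inl p2 : P ⊕ L) = Sum.inl q := by
        rcases hw2.2 with h | h
        · exact h
        · obtain ⟨l', heq, -⟩ := (adj_inl incid).1 h
          exact absurd heq (by simp)
      rw [h1, h2]

end PlaneLemmas


/-- On the incidence graph of a projective plane of order `n ≥ 2`, if the cop and the drunk
robber start at distance at least `2`, then **every** valid cop strategy has expected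
capture time at least `n + 1` (the degree of regularity of the graph).  Since this graph
has diameter `3`, no function of the diameter alone can bound the expected capture time. -/
theorem projectivePlane_expected_capture_time_ge {P L : Type} [Fintype P] [Fintype L]
    (incid : P → L → Prop) (n : ℕ) (hn : 2 ≤ n) (hpp : IsProjectivePlaneOfOrder incid n)
    (u v : P ⊕ L) (huv : 2 ≤ (incidenceGraph incid).dist u v)
    (σ : List (P ⊕ L) → (P ⊕ L)) (hσ : ValidStrategy (incidenceGraph incid) σ u) :
    ((n : ℝ≥0∞) + 1) ≤ expCaptureTime (incidenceGraph incid) σ u v := by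
  set G := incidenceGraph incid with hG
  have hreg : ∀ x : P ⊕ L, G.degree x = n + 1 := degree_incidence incid n hpp
  have hbad : ∀ a b : P ⊕ L, a ≠ b → ∀ w1 w2 : P ⊕ L,
      G.Adj b w1 ∧ (w1 = a ∨ G.Adj a w1) → G.Adj b w2 ∧ (w2 = a ∨ G.Adj a w2) → w1 = w2 :=
    fun a b hab w1 w2 h1 h2 => bad_card_le incid n hpp hab w1 w2 h1 h2
  have hsep : CSep G u v := by
    constructor
    · intro h
      rw [h, SimpleGraph.dist_self] at huv
      omega
    · intro h
      have := SimpleGraph.dist_le h.toWalk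
      simp [SimpleGraph.Adj.toWalk] at this
      omega
  have hpow : ∀ k, ((n : ℝ≥0∞) * ((n : ℝ≥0∞) + 1)⁻¹) ^ k ≤ survival G σ u v k := fun k =>
    le_trans (goodSum_ge_pow G σ u v n hreg hbad hσ hsep k)
      (goodSum_le_survival G σ u v hσ k)
  have hts : (∑' k : ℕ, ((n : ℝ≥0∞) * ((n : ℝ≥0∞) + 1)⁻¹) ^ k) ≤ expCaptureTime G σ u v :=
    ENNReal.tsum_le_tsum hpow
  refine le_trans ?_ hts
  rw [ENNReal.tsum_geometric]
  have hne : ((n : ℝ≥0∞) + 1) ≠ 0 := by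
    simp
  have hnt : ((n : ℝ≥0∞) + 1) ≠ ⊤ := by
    simp [ENNReal.add_ne_top]
  have hsub : (1 : ℝ≥0∞) - (n : ℝ≥0∞) * ((n : ℝ≥0∞) + 1)⁻¹ = ((n : ℝ≥0∞) + 1)⁻¹ := by
    refine ENNReal.sub_eq_of_eq_add ?_ ?_
    · exact ENNReal.mul_ne_top (ENNReal.natCast_ne_top n) (ENNReal.inv_ne_top.mpr hne)
    · have hcancel : ((n : ℝ≥0∞) + 1) * ((n : ℝ≥0∞) + 1)⁻¹ = 1 :=
        ENNReal.mul_inv_cancel hne hnt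
      calc (1 : ℝ≥0∞) = ((n : ℝ≥0∞) + 1) * ((n : ℝ≥0∞) + 1)⁻¹ := hcancel.symm
        _ = ((n : ℝ≥0∞) + 1)⁻¹ + (n : ℝ≥0∞) * ((n : ℝ≥0∞) + 1)⁻¹ := by ring
  rw [hsub, inv_inv]
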